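/- Let ω be an integrable random variable and f(u) = s·(-u)₊ + h·u₊ with s, h > 0. Then G(y) = E[f(y - ω)] is differentiable at every y where P(ω = y) = 0, with G'(y) = -s·P(ω > y) + h·P(ω ≤ y) = -s + (s+h)·P(ω ≤ y). -/

import Mathlib

open MeasureTheory

private lemma aux_lip (s h : ℝ) (hs : 0 ≤ s) (hh : 0 ≤ h) (c : ℝ) :
    LipschitzWith (Real.nnabs (s + h))
      (fun x : ℝ => s * max (c - x) 0 + h * max (x - c) 0) := by
  apply LipschitzWith.of_dist_le_mul
  intro x y
  simp only [Real.dist_eq, Real.coe_nnabs]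
  rw [abs_of_nonneg (by linarith : (0:ℝ) ≤ s + h)]
  have h1 : |max (c - x) 0 - max (c - y) 0| ≤ |x - y| := by
    have := abs_max_sub_max_le_abs (c - x) (c - y) 0
    have e : (c - x) - (c - y) = y - x := by ring
    rw [e, abs_sub_comm y x] at this
    exact this
  have h2 : |max (x - c) 0 - max (y - c) 0| ≤ |x - y| := by
    have := abs_max_sub_max_le_abs (x - c) (y - c) 0
    have e : (x - c) - (y - c) = x - y := by ring
    rwa [e] at this
  calc |s * max (c - x) 0 + h * max (x - c) 0 - (s * max (c - y) 0 + h * max (y - c) 0)|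
      = |s * (max (c - x) 0 - max (c - y) 0) + h * (max (x - c) 0 - max (y - c) 0)| := by
        ring_nf
    _ ≤ |s * (max (c - x) 0 - max (c - y) 0)| + |h * (max (x - c) 0 - max (y - c) 0)| :=
        abs_add_le _ _
    _ = s * |max (c - x) 0 - max (c - y) 0| + h * |max (x - c) 0 - max (y - c) 0| := by
        rw [abs_mul, abs_mul, abs_of_nonneg hs, abs_of_nonneg hh]
    _ ≤ s * |x - y| + h * |x - y| := by
        gcongr
    _ = (s + h) * |x - y| := by ring

private theorem aux_deriv {Ωs : Type*} [MeasurableSpace Ωs] (μ : Measure Ωs)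
    [IsProbabilityMeasure μ]
    (ω : Ωs → ℝ) (hmeas : Measurable ω) (hω : Integrable ω μ)
    (s h : ℝ) (hs : 0 < s) (hh : 0 < h)
    (y : ℝ) (hy : μ {a | ω a = y} = 0) :
    HasDerivAt (fun x => ∫ a, (s * max (ω a - x) 0 + h * max (x - ω a) 0) ∂μ)
      (-s * (μ {a | y < ω a}).toReal + h * (μ {a | ω a ≤ y}).toReal) y := by
  set F : ℝ → Ωs → ℝ := fun x a => s * max (ω a - x) 0 + h * max (x - ω a) 0 with hF
  set F' : Ωs → ℝ := fun a => if y < ω a then -s else h with hF'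
  have hA : MeasurableSet {a | y < ω a} := measurableSet_lt measurable_const hmeas
  have hB : MeasurableSet {a | ω a ≤ y} := measurableSet_le hmeas measurable_const
  have hAB : {a | ω a ≤ y} = {a | y < ω a}ᶜ := by
    ext a; simp [not_lt]
  have hF_meas : ∀ x : ℝ, AEStronglyMeasurable (F x) μ := by
    intro x
    apply Measurable.aestronglyMeasurable
    exact ((measurable_const.mul ((hmeas.sub measurable_const).max measurable_const)).add
      (measurable_const.mul ((measurable_const.sub hmeas).max measurable_const)))
  have hF_int : Integrable (F y) μ := by
    refine Integrable.mono' (g := fun a => (s + h) * |ω a - y|)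
      ((((hω.sub (integrable_const y)).abs).const_mul (s + h))) (hF_meas y) ?_
    filter_upwards with a
    have h1 : max (ω a - y) 0 ≤ |ω a - y| := max_le (le_abs_self _) (abs_nonneg _)
    have h2 : max (y - ω a) 0 ≤ |ω a - y| := by
      rw [abs_sub_comm]; exact max_le (le_abs_self _) (abs_nonneg _)
    have h3 : 0 ≤ max (ω a - y) 0 := le_max_right _ _
    have h4 : 0 ≤ max (y - ω a) 0 := le_max_right _ _
    have hFya : F y a = s * max (ω a - y) 0 + h * max (y - ω a) 0 := rfl
    rw [Real.norm_eq_abs, hFya, abs_of_nonneg (by positivity)]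
    nlinarith [mul_le_mul_of_nonneg_left h1 hs.le, mul_le_mul_of_nonneg_left h2 hh.le]
  have hF'_meas : AEStronglyMeasurable F' μ := by
    apply Measurable.aestronglyMeasurable
    exact Measurable.ite hA measurable_const measurable_const
  have h_lip : ∀ᵐ a ∂μ, LipschitzOnWith (Real.nnabs ((fun _ : Ωs => s + h) a))
      (fun x => F x a) (Metric.ball y 1) := by
    filter_upwards with a
    exact LipschitzWith.lipschitzOnWith (s := Metric.ball y 1) (aux_lip s h hs.le hh.le (ω a))
  have h_diff : ∀ᵐ a ∂μ, HasDerivAt (fun x => F x a) (F' a) y := by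
    have : ∀ᵐ a ∂μ, ω a ≠ y := by
      rw [ae_iff]; simpa using hy
    filter_upwards [this] with a ha
    rcases lt_or_gt_of_ne ha with hlt | hgt
    · -- ω a < y : locally F x a = h * (x - ω a), derivative h
      have hF'a : F' a = h := by simp [hF', not_lt.2 hlt.le]
      rw [hF'a]
      have hd : HasDerivAt (fun x : ℝ => h * (x - ω a)) h y := by
        simpa using ((hasDerivAt_id y).sub_const (ω a)).const_mul h
      apply hd.congr_of_eventuallyEq
      have : ∀ᶠ x in nhds y, ω a < x := Filter.Tendsto.eventually_const_lt hlt Filter.tendsto_id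
      filter_upwards [this] with x hx
      have e1 : max (ω a - x) 0 = 0 := max_eq_right (by linarith)
      have e2 : max (x - ω a) 0 = x - ω a := max_eq_left (by linarith)
      simp [hF, e1, e2]
    · -- y < ω a : locally F x a = s * (ω a - x), derivative -s
      have hF'a : F' a = -s := by simp [hF', hgt]
      rw [hF'a]
      have hd : HasDerivAt (fun x : ℝ => s * (ω a - x)) (-s) y := by
        simpa using ((hasDerivAt_id y).const_sub (ω a)).const_mul s
      apply hd.congr_of_eventuallyEq
      have : ∀ᶠ x in nhds y, x < ω a := Filter.Tendsto.eventually_lt_const hgt Filter.tendsto_id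
      filter_upwards [this] with x hx
      have e1 : max (ω a - x) 0 = ω a - x := max_eq_left (by linarith)
      have e2 : max (x - ω a) 0 = 0 := max_eq_right (by linarith)
      simp [hF, e1, e2]
  have key := hasDerivAt_integral_of_dominated_loc_of_lip (F := F) (F' := F')
    (bound := fun _ => s + h) (Metric.ball_mem_nhds y one_pos)
    (Filter.Eventually.of_forall hF_meas) hF_int hF'_meas h_lip (integrable_const _) h_diff
  have hval : ∫ a, F' a ∂μ
      = -s * (μ {a | y < ω a}).toReal + h * (μ {a | ω a ≤ y}).toReal := by
    have hrw : F' = fun a => ({a | y < ω a}).indicator (fun _ => (-s : ℝ)) a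
        + ({a | ω a ≤ y}).indicator (fun _ => (h : ℝ)) a := by
      funext a
      by_cases hc : y < ω a
      · simp [hF', hc, Set.indicator_apply, not_le.2 hc]
      · simp [hF', hc, Set.indicator_apply, not_lt.1 hc]
    rw [hrw, integral_add ((integrable_const (-s : ℝ)).indicator hA)
        ((integrable_const (h : ℝ)).indicator hB),
      integral_indicator_const _ hA, integral_indicator_const _ hB]
    simp [mul_comm, smul_eq_mul, Measure.real]
  rw [← hval]
  exact key.2

/-- Differentiability of the expected holding/shortage cost: with
`f u = s·(-u)₊ + h·u₊` and `G y = E[f (y - ω)]`, at every `y` with `P(ω = y) = 0`,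
`G` is differentiable with `G' y = -s·P(ω > y) + h·P(ω ≤ y) = -s + (s+h)·P(ω ≤ y)`. -/
theorem expected_penalty_deriv
    {Ωs : Type*} [MeasurableSpace Ωs] (μ : Measure Ωs) [IsProbabilityMeasure μ]
    (ω : Ωs → ℝ) (hω : Integrable ω μ)
    (s h : ℝ) (hs : 0 < s) (hh : 0 < h)
    (f : ℝ → ℝ) (hf : ∀ u, f u = s * max (-u) 0 + h * max u 0)
    (G : ℝ → ℝ) (hG : ∀ y, G y = ∫ a, f (y - ω a) ∂μ)
    (y : ℝ) (hy : μ {a | ω a = y} = 0) :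
    HasDerivAt G (-s * (μ {a | y < ω a}).toReal + h * (μ {a | ω a ≤ y}).toReal) y ∧
    -s * (μ {a | y < ω a}).toReal + h * (μ {a | ω a ≤ y}).toReal
      = -s + (s + h) * (μ {a | ω a ≤ y}).toReal := by
  set ω' : Ωs → ℝ := hω.1.mk ω with hω'def
  have hmeas : Measurable ω' := hω.1.measurable_mk
  have hae : ω =ᵐ[μ] ω' := hω.1.ae_eq_mk
  have hω' : Integrable ω' μ := hω.congr hae
  have hset_lt : μ {a | y < ω a} = μ {a | y < ω' a} := by
    apply measure_congr
    rw [Filter.eventuallyEq_set]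
    filter_upwards [hae] with a ha
    simp [ha]
  have hset_le : μ {a | ω a ≤ y} = μ {a | ω' a ≤ y} := by
    apply measure_congr
    rw [Filter.eventuallyEq_set]
    filter_upwards [hae] with a ha
    simp [ha]
  have hset_eq : μ {a | ω' a = y} = 0 := by
    rw [← hy]
    symm
    apply measure_congr
    rw [Filter.eventuallyEq_set]
    filter_upwards [hae] with a ha
    simp [ha]
  have hGeq : G = fun x => ∫ a, (s * max (ω' a - x) 0 + h * max (x - ω' a) 0) ∂μ := by
    funext x
    rw [hG x]
    apply integral_congr_ae
    filter_upwards [hae] with a ha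
    rw [hf, ha]
    ring_nf
  have hderiv : HasDerivAt G
      (-s * (μ {a | y < ω a}).toReal + h * (μ {a | ω a ≤ y}).toReal) y := by
    rw [hGeq, hset_lt, hset_le]
    exact aux_deriv μ ω' hmeas hω' s h hs hh y hset_eq
  refine ⟨hderiv, ?_⟩
  have hcompl : μ {a | y < ω' a} = 1 - μ {a | ω' a ≤ y} := by
    have : {a | y < ω' a} = {a | ω' a ≤ y}ᶜ := by ext a; simp [not_le]
    rw [this, measure_compl (measurableSet_le hmeas measurable_const) (measure_ne_top μ _),
      measure_univ]
  have hle1 : μ {a | ω' a ≤ y} ≤ 1 := prob_le_one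
  have htr : (μ {a | y < ω a}).toReal = 1 - (μ {a | ω a ≤ y}).toReal := by
    rw [hset_lt, hset_le, hcompl, ENNReal.toReal_sub_of_le hle1 (by simp)]
    simp
  rw [htr]
  ring
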